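/- Let T be a positive compact self-adjoint operator on L²(𝒳, μ) (for instance the integral operator of a continuous positive definite kernel with finite trace), and let Ω₁ ⊆ Ω₂ ⊆ 𝒳 be measurable sets. Then for every ε > 0, N^+(ε, P_{Ω₁} T P_{Ω₁}) ≤ N^+(ε, P_{Ω₂} T P_{Ω₂}). -/

import Mathlib

open MeasureTheory Filter Topology RealInnerProductSpace

noncomputable section

/-- `N^+(ε, A)`: the number of eigenvalues of a compact self-adjoint operator `A` strictly
greater than `ε`, characterized (Courant–Fischer) as the maximal dimension of a subspace on
which the quadratic form of `A` exceeds `ε‖·‖²`. -/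
def opNplus {H : Type*} [NormedAddCommGroup H] [InnerProductSpace ℝ H]
    (A : H →L[ℝ] H) (ε : ℝ) : ℕ :=
  sSup {n : ℕ | ∃ V : Submodule ℝ H, FiniteDimensional ℝ V ∧ Module.finrank ℝ V = n ∧
        ∀ x ∈ V, x ≠ 0 → ε * ‖x‖ ^ 2 < ⟪A x, x⟫}

/-- The set of dimensions appearing in the definition of `N^+(ε, A)` is bounded above when
`A` is a compact operator and `ε > 0`. -/
lemma opNplus_bddAbove {H : Type*} [NormedAddCommGroup H] [InnerProductSpace ℝ H]
    {A : H →L[ℝ] H} (hA : IsCompactOperator A) {ε : ℝ} (hε : 0 < ε) :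
    BddAbove {n : ℕ | ∃ V : Submodule ℝ H, FiniteDimensional ℝ V ∧ Module.finrank ℝ V = n ∧
        ∀ x ∈ V, x ≠ 0 → ε * ‖x‖ ^ 2 < ⟪A x, x⟫} := by
  obtain ⟨K, hK, hKsub⟩ :=
    IsCompactOperator.image_closedBall_subset_compact (f := (A : H →ₗ[ℝ] H)) hA 1
  have htb := hK.totallyBounded
  rw [Metric.totallyBounded_iff] at htb
  obtain ⟨t, htfin, htsub⟩ := htb (ε / 2) (by positivity)
  haveI : Fintype t := htfin.fintype
  refine ⟨Fintype.card t, fun n hn => ?_⟩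
  obtain ⟨V, hfd, hrank, hV⟩ := hn
  subst hrank
  let b := stdOrthonormalBasis ℝ V
  -- images of the orthonormal basis vectors lie in the cover
  have hmem : ∀ i : Fin (Module.finrank ℝ V), A ((b i : H)) ∈ ⋃ y ∈ t, Metric.ball y (ε / 2) := by
    intro i
    apply htsub
    apply hKsub
    refine ⟨(b i : H), ?_, rfl⟩
    have : ‖(b i : H)‖ = 1 := b.orthonormal.1 i
    simp [Metric.mem_closedBall, this]
  choose p hp hball using fun i => Set.mem_iUnion₂.1 (hmem i)
  have hinj : Function.Injective p := by
    intro i j hij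
    by_contra hne
    -- the difference is a nonzero element of V
    have hbne : b i - b j ≠ 0 := sub_ne_zero.2 fun h => hne (b.toBasis.injective (by simpa using h))
    set z : H := (b i : H) - (b j : H) with hz
    have hzV : z ∈ V := V.sub_mem (b i).2 (b j).2
    have hz0 : z ≠ 0 := by
      intro h
      apply hbne
      have : ((b i - b j : V) : H) = 0 := by push_cast [hz] at h ⊢; exact h
      exact Subtype.coe_injective (by simpa using this)
    have hsep : 1 ≤ ‖z‖ := by
      have h2 : ‖z‖ ^ 2 = 2 := by
        rw [hz, norm_sub_sq_real]
        have h1 : ‖(b i : H)‖ = 1 := b.orthonormal.1 i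
        have h1' : ‖(b j : H)‖ = 1 := b.orthonormal.1 j
        have h0 : ⟪(b i : H), (b j : H)⟫ = 0 := b.orthonormal.2 hne
        rw [h1, h1', h0]; ring
      nlinarith [norm_nonneg z]
    have hlt := hV z hzV hz0
    have hcs : ⟪A z, z⟫ ≤ ‖A z‖ * ‖z‖ := real_inner_le_norm _ _
    have hzpos : (0:ℝ) < ‖z‖ := lt_of_lt_of_le one_pos hsep
    have hAz : ε < ‖A z‖ := by
      have h1 : ε * ‖z‖ * ‖z‖ < ‖A z‖ * ‖z‖ := by nlinarith
      have h2 : ε * ‖z‖ < ‖A z‖ := (mul_lt_mul_iff_of_pos_right hzpos).1 h1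
      calc ε = ε * 1 := (mul_one ε).symm
        _ ≤ ε * ‖z‖ := mul_le_mul_of_nonneg_left hsep hε.le
        _ < ‖A z‖ := h2
    -- but both images are in the same small ball
    have hd : dist (A (b i : H)) (A (b j : H)) < ε := by
      calc dist (A (b i : H)) (A (b j : H))
          ≤ dist (A (b i : H)) (p i) + dist (p j) (A (b j : H)) := by
            rw [hij]; exact dist_triangle _ _ _
        _ < ε / 2 + ε / 2 := by
            refine add_lt_add ?_ ?_
            · exact Metric.mem_ball.1 (hball i)
            · exact Metric.mem_ball'.1 (hball j)
        _ = ε := by ring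
    rw [dist_eq_norm, ← map_sub] at hd
    exact absurd hd (not_lt.2 hAz.le)
  calc Module.finrank ℝ V = Fintype.card (Fin (Module.finrank ℝ V)) := (Fintype.card_fin _).symm
    _ ≤ Fintype.card t :=
        Fintype.card_le_of_injective (fun i => ⟨p i, hp i⟩)
          (fun i j h => hinj (by simpa using congrArg Subtype.val h))

/-- For a positive compact self-adjoint operator `T` on `L²(𝒳, μ)` and
measurable sets `Ω₁ ⊆ Ω₂`, with `P_j` the multiplication operators by the indicator functions
of `Ω_j`, one has `N^+(ε, P_{Ω₁} T P_{Ω₁}) ≤ N^+(ε, P_{Ω₂} T P_{Ω₂})` for every `ε > 0`. -/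
theorem opNplus_indicator_mono
    {X : Type*} [TopologicalSpace X] [T2Space X] [MeasurableSpace X] [BorelSpace X]
    (μ : Measure X)
    (T : Lp ℝ 2 μ →L[ℝ] Lp ℝ 2 μ)
    (hT_sa : ∀ f g : Lp ℝ 2 μ, ⟪T f, g⟫ = ⟪f, T g⟫)
    (hT_pos : ∀ f : Lp ℝ 2 μ, (0:ℝ) ≤ ⟪T f, f⟫)
    (hT_cpt : IsCompactOperator T)
    (Ω₁ Ω₂ : Set X) (hΩ₁ : MeasurableSet Ω₁) (hΩ₂ : MeasurableSet Ω₂) (hsub : Ω₁ ⊆ Ω₂)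
    (P₁ P₂ : Lp ℝ 2 μ →L[ℝ] Lp ℝ 2 μ)
    (hP₁ : ∀ f : Lp ℝ 2 μ,
        (P₁ f : X → ℝ) =ᵐ[μ] fun x => Set.indicator Ω₁ (fun _ => (1:ℝ)) x * f x)
    (hP₂ : ∀ f : Lp ℝ 2 μ,
        (P₂ f : X → ℝ) =ᵐ[μ] fun x => Set.indicator Ω₂ (fun _ => (1:ℝ)) x * f x)
    (ε : ℝ) (hε : 0 < ε) :
    opNplus (P₁ ∘L T ∘L P₁) ε ≤ opNplus (P₂ ∘L T ∘L P₂) ε := by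
  classical
  -- self-adjointness of the projections
  have hself : ∀ (P : Lp ℝ 2 μ →L[ℝ] Lp ℝ 2 μ) (Ω : Set X),
      (∀ f : Lp ℝ 2 μ, (P f : X → ℝ) =ᵐ[μ] fun x => Set.indicator Ω (fun _ => (1:ℝ)) x * f x) →
      ∀ f g : Lp ℝ 2 μ, ⟪P f, g⟫ = ⟪f, P g⟫ := by
    intro P Ω hP f g
    rw [L2.inner_def, L2.inner_def]
    refine integral_congr_ae ?_
    filter_upwards [hP f, hP g] with x h1 h2
    simp only [RCLike.inner_apply, starRingEnd_apply, star_trivial]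
    rw [h1, h2]; ring
  have hself₁ := hself P₁ Ω₁ hP₁
  have hself₂ := hself P₂ Ω₂ hP₂
  -- `P₂ ∘ P₁ = P₁`
  have hPP : ∀ f : Lp ℝ 2 μ, P₂ (P₁ f) = P₁ f := by
    intro f
    refine Lp.ext ?_
    filter_upwards [hP₂ (P₁ f), hP₁ f] with x h2 h1
    rw [h2, h1]
    by_cases hx : x ∈ Ω₁
    · simp [Set.indicator_of_mem hx, Set.indicator_of_mem (hsub hx)]
    · simp [Set.indicator_of_notMem hx]
  -- `P₁` is norm-decreasing
  have hnorm : ∀ f : Lp ℝ 2 μ, ‖P₁ f‖ ≤ ‖f‖ := by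
    intro f
    rw [Lp.norm_def, Lp.norm_def]
    refine ENNReal.toReal_mono (Lp.eLpNorm_ne_top f) (eLpNorm_mono_ae ?_)
    filter_upwards [hP₁ f] with x h
    rw [h]
    by_cases hx : x ∈ Ω₁
    · simp [Set.indicator_of_mem hx]
    · simp [Set.indicator_of_notMem hx]
  -- the target operator is compact
  have hcpt₂ : IsCompactOperator (P₂ ∘L T ∘L P₂) := by
    have h1 : IsCompactOperator (⇑T ∘ ⇑P₂) := hT_cpt.comp_clm P₂
    have h2 : IsCompactOperator (⇑P₂ ∘ ⇑T ∘ ⇑P₂) := h1.clm_comp P₂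
    have : ⇑(P₂ ∘L T ∘L P₂) = ⇑P₂ ∘ ⇑T ∘ ⇑P₂ := by
      ext x; simp
    rwa [this]
  unfold opNplus
  refine csSup_le_csSup (opNplus_bddAbove hcpt₂ hε) ?_ ?_
  · -- nonempty: the zero subspace works
    refine ⟨0, ⊥, inferInstance, finrank_bot ℝ _, ?_⟩
    intro x hx hne
    rw [Submodule.mem_bot] at hx
    exact absurd hx hne
  · rintro n ⟨V, hfd, hrank, hV⟩
    -- push the subspace forward by `P₁`
    refine ⟨V.map (P₁ : Lp ℝ 2 μ →ₗ[ℝ] Lp ℝ 2 μ), ?_, ?_, ?_⟩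
    · exact Module.Finite.map V _
    · -- the rank is preserved, since `P₁` is injective on `V`
      have hinj : Function.Injective ((P₁ : Lp ℝ 2 μ →ₗ[ℝ] Lp ℝ 2 μ).domRestrict V) := by
        rw [← LinearMap.ker_eq_bot, LinearMap.ker_eq_bot']
        intro m hm
        by_contra hne
        have hm0 : m ≠ 0 := hne
        have hx0 : (m : Lp ℝ 2 μ) ≠ 0 := fun h => hm0 (Subtype.coe_injective (by simpa using h))
        have hlt := hV m m.2 hx0
        have hP1m : P₁ (m : Lp ℝ 2 μ) = 0 := hm
        rw [ContinuousLinearMap.comp_apply, ContinuousLinearMap.comp_apply, hP1m, map_zero,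
          map_zero, inner_zero_left] at hlt
        have hmpos : (0:ℝ) < ‖(m : Lp ℝ 2 μ)‖ := norm_pos_iff.2 hx0
        have : (0:ℝ) < ε * ‖(m : Lp ℝ 2 μ)‖ ^ 2 := mul_pos hε (pow_pos hmpos 2)
        linarith
      have := LinearMap.finrank_range_of_inj hinj
      rw [LinearMap.range_domRestrict] at this
      rw [this, hrank]
    · rintro y ⟨x, hxV, rfl⟩ hy0
      simp only [ContinuousLinearMap.coe_coe] at hy0 ⊢
      have hx0 : x ≠ 0 := by rintro rfl; simp at hy0
      have hlt := hV x hxV hx0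
      rw [ContinuousLinearMap.comp_apply, ContinuousLinearMap.comp_apply, hself₁] at hlt
      rw [ContinuousLinearMap.comp_apply, ContinuousLinearMap.comp_apply, hself₂, hPP]
      calc ε * ‖P₁ x‖ ^ 2 ≤ ε * ‖x‖ ^ 2 :=
            mul_le_mul_of_nonneg_left (pow_le_pow_left₀ (norm_nonneg _) (hnorm x) 2) hε.le
        _ < ⟪T (P₁ x), P₁ x⟫ := hlt
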